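/- Fix t > 0 and θ ∈ ℂ with Im θ > 0, and define f_θ : ℍ → ℍ by f_θ(x) = θ + t·tan x. Let ζ ∈ ℍ be the unique fixed point of f_θ in ℍ (i.e. the unique ζ ∈ ℍ with ζ − t·tan ζ = θ). Then the iterates f_θ^{∘n}(x) converge to ζ as n → ∞, locally uniformly in x ∈ ℍ (in particular, the limit does not depend on the starting point x ∈ ℍ). -/

import Mathlib

open Complex Metric Set Filter Function

namespace Complex

noncomputable def abs : AbsoluteValue ℂ ℝ := IsAbsoluteValue.toAbsoluteValue (norm : ℂ → ℝ)

lemma abs_eq_norm' (z : ℂ) : Complex.abs z = ‖z‖ := rfl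

lemma abs_apply (z : ℂ) : Complex.abs z = Real.sqrt (Complex.normSq z) := rfl

lemma sq_abs (z : ℂ) : Complex.abs z ^ 2 = Complex.normSq z := Complex.sq_norm z

@[simp] lemma abs_conj (z : ℂ) : Complex.abs (starRingEnd ℂ z) = Complex.abs z :=
  Complex.norm_conj z

@[simp] lemma abs_ofReal (r : ℝ) : Complex.abs (r : ℂ) = |r| := Complex.norm_real r

@[simp] lemma abs_I' : Complex.abs Complex.I = 1 := Complex.norm_I

@[simp] lemma abs_two' : Complex.abs 2 = 2 := by rw [abs_eq_norm']; norm_num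

lemma abs_exp (z : ℂ) : Complex.abs (Complex.exp z) = Real.exp z.re := Complex.norm_exp z

lemma abs_le_abs_of_mapsTo_ball_self {f : ℂ → ℂ} {z : ℂ}
    (hd : DifferentiableOn ℂ f (ball 0 1)) (h_maps : MapsTo f (ball 0 1) (ball 0 1))
    (h₀ : f 0 = 0) (hz : Complex.abs z < 1) : Complex.abs (f z) ≤ Complex.abs z :=
  norm_le_norm_of_mapsTo_ball hd (h_maps.mono_right ball_subset_closedBall) h₀ hz

end Complex

noncomputable section

namespace Stmt13Aux

local notation "conj'" => starRingEnd ℂ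

lemma normSq_key (a b : ℂ) :
    Complex.normSq (1 - conj' b * a) - Complex.normSq (a - b)
      = (1 - Complex.normSq a) * (1 - Complex.normSq b) := by
  simp only [Complex.normSq_apply, Complex.sub_re, Complex.sub_im, Complex.mul_re,
    Complex.mul_im, Complex.one_re, Complex.one_im, Complex.conj_re, Complex.conj_im]
  ring

lemma abs_den_pos {a b : ℂ} (ha : Complex.abs a < 1) (hb : Complex.abs b < 1) :
    0 < Complex.abs (1 - conj' b * a) := by
  rw [AbsoluteValue.pos_iff]
  intro h
  have h1 : conj' b * a = 1 := by linear_combination -h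
  have : Complex.abs (conj' b * a) < 1 := by
    rw [map_mul, Complex.abs_conj]
    calc Complex.abs b * Complex.abs a ≤ 1 * Complex.abs a := by
          exact mul_le_mul_of_nonneg_right hb.le (Complex.abs.nonneg a)
      _ < 1 := by simpa using ha
  rw [h1] at this; simp at this

lemma abs_num_lt_den {a b : ℂ} (ha : Complex.abs a < 1) (hb : Complex.abs b < 1) :
    Complex.abs (a - b) < Complex.abs (1 - conj' b * a) := by
  have h1 : Complex.normSq a < 1 := by
    have := Complex.sq_abs a; nlinarith [Complex.abs.nonneg a]
  have h2 : Complex.normSq b < 1 := by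
    have := Complex.sq_abs b; nlinarith [Complex.abs.nonneg b]
  have key := normSq_key a b
  have h3 : Complex.normSq (a - b) < Complex.normSq (1 - conj' b * a) := by nlinarith
  rw [Complex.abs_apply, Complex.abs_apply]
  exact Real.sqrt_lt_sqrt (Complex.normSq_nonneg _) h3

/-- Möbius involution of the disk. -/
def mob (b z : ℂ) : ℂ := (b - z) / (1 - conj' b * z)

lemma den_ne {a b : ℂ} (ha : Complex.abs a < 1) (hb : Complex.abs b < 1) :
    1 - conj' b * a ≠ 0 := fun h => by
  have := abs_den_pos ha hb; rw [h] at this; simp at this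

lemma mob_mem {b z : ℂ} (hb : Complex.abs b < 1) (hz : Complex.abs z < 1) :
    Complex.abs (mob b z) < 1 := by
  rw [mob, map_div₀, div_lt_one (abs_den_pos hz hb)]
  have := abs_num_lt_den hz hb
  rwa [Complex.abs.map_sub z b] at this

lemma mob_invol {b z : ℂ} (hb : Complex.abs b < 1) (hz : Complex.abs z < 1) :
    mob b (mob b z) = z := by
  have h1 : 1 - conj' b * z ≠ 0 := den_ne hz hb
  have h2 : 1 - conj' b * b ≠ 0 := den_ne hb hb
  rw [mob, mob]
  rw [div_eq_iff, eq_comm]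
  · have h1' : 1 - z * conj' b ≠ 0 := by rwa [mul_comm]
    field_simp
    ring
  · rw [sub_ne_zero]
    intro h
    have : (1 - conj' b * z) - conj' b * (b - z) = 0 := by
      field_simp at h ⊢
      linear_combination h
    have h3 : (1 : ℂ) - conj' b * b = 0 := by linear_combination this
    exact h2 h3

lemma mob_diff {b : ℂ} (hb : Complex.abs b < 1) :
    DifferentiableOn ℂ (mob b) (ball 0 1) := by
  apply DifferentiableOn.div
  · exact (differentiable_const b).differentiableOn.sub differentiable_id.differentiableOn
  · exact (differentiable_const (1:ℂ)).differentiableOn.sub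
      ((differentiable_const _).mul differentiable_id).differentiableOn
  · intro z hz
    rw [mem_ball_zero_iff] at hz
    exact den_ne hz hb

/-- Schwarz–Pick inequality in product form. -/
lemma pick {G : ℂ → ℂ} (hd : DifferentiableOn ℂ G (ball 0 1))
    (hm : MapsTo G (ball 0 1) (ball 0 1)) {a b : ℂ}
    (ha : Complex.abs a < 1) (hb : Complex.abs b < 1) :
    Complex.abs (G a - G b) * Complex.abs (1 - conj' b * a) ≤
      Complex.abs (a - b) * Complex.abs (1 - conj' (G b) * G a) := by
  have hmem : ∀ {z : ℂ}, Complex.abs z < 1 → z ∈ ball (0:ℂ) 1 := fun hz =>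
    mem_ball_zero_iff.2 hz
  have habs : ∀ {z : ℂ}, z ∈ ball (0:ℂ) 1 → Complex.abs z < 1 := fun hz =>
    mem_ball_zero_iff.1 hz
  have hGa : Complex.abs (G a) < 1 := habs (hm (hmem ha))
  have hGb : Complex.abs (G b) < 1 := habs (hm (hmem hb))
  set H : ℂ → ℂ := fun z => mob (G b) (G (mob b z)) with hH
  have hmob1 : MapsTo (mob b) (ball (0:ℂ) 1) (ball (0:ℂ) 1) := fun z hz =>
    hmem (mob_mem hb (habs hz))
  have hGm : MapsTo (fun z => G (mob b z)) (ball (0:ℂ) 1) (ball (0:ℂ) 1) :=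
    fun z hz => hm (hmob1 hz)
  have hHd : DifferentiableOn ℂ H (ball 0 1) := by
    apply DifferentiableOn.comp (mob_diff hGb) _ (fun z hz => hm (hmob1 hz))
    exact DifferentiableOn.comp hd (mob_diff hb) hmob1
  have hHm : MapsTo H (ball (0:ℂ) 1) (ball (0:ℂ) 1) := fun z hz =>
    hmem (mob_mem hGb (habs (hGm hz)))
  have hH0 : H 0 = 0 := by
    have h1 : mob b 0 = b := by simp [mob]
    rw [hH]; simp only [h1]
    simp [mob]
  have hkey : Complex.abs (H (mob b a)) ≤ Complex.abs (mob b a) :=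
    Complex.abs_le_abs_of_mapsTo_ball_self hHd hHm hH0 (mob_mem hb ha)
  have hHval : H (mob b a) = mob (G b) (G a) := by rw [hH]; simp only [mob_invol hb ha]
  rw [hHval] at hkey
  rw [mob, mob, map_div₀, map_div₀, div_le_div_iff₀ (abs_den_pos hGa hGb) (abs_den_pos ha hb)]
    at hkey
  calc Complex.abs (G a - G b) * Complex.abs (1 - conj' b * a)
      = Complex.abs (G b - G a) * Complex.abs (1 - conj' b * a) := by
        rw [Complex.abs.map_sub]
    _ ≤ Complex.abs (b - a) * Complex.abs (1 - conj' (G b) * G a) := hkey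
    _ = Complex.abs (a - b) * Complex.abs (1 - conj' (G b) * G a) := by
        rw [Complex.abs.map_sub]

lemma scale_ineq {s : ℝ} (hs0 : 0 ≤ s) (hs1 : s ≤ 1) {z : ℂ} (hz : Complex.abs z ≤ 1) :
    (1 + s^2) * Complex.abs (1 - z) ≤ 2 * Complex.abs (1 - (s^2 : ℝ) * z) := by
  have hz2 : Complex.normSq z ≤ 1 := by
    have := Complex.sq_abs z; nlinarith [Complex.abs.nonneg z]
  set x := z.re; set y := z.im
  have hxy : x^2 + y^2 ≤ 1 := by
    have h : Complex.normSq z = x^2 + y^2 := by rw [Complex.normSq_apply]; ring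
    linarith [h ▸ hz2]
  have hx1 : -1 ≤ x := by nlinarith [sq_nonneg y]
  have h1 : Complex.normSq (1 - z) = (1-x)^2 + y^2 := by
    simp [Complex.normSq_apply, Complex.sub_re, Complex.sub_im]; ring
  have h2 : Complex.normSq (1 - (s^2:ℝ) * z) = (1 - s^2*x)^2 + (s^2*y)^2 := by
    simp [Complex.normSq_apply, Complex.sub_re, Complex.sub_im, Complex.mul_re, Complex.mul_im,
      ← Complex.ofReal_pow, Complex.ofReal_re, Complex.ofReal_im]
    ring
  have key : ((1+s^2) * Complex.abs (1 - z))^2 ≤ (2 * Complex.abs (1 - (s^2:ℝ)*z))^2 := by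
    rw [mul_pow, mul_pow, Complex.sq_abs, Complex.sq_abs, h1, h2]
    have hid : 2^2 * ((1 - s^2*x)^2 + (s^2*y)^2) - (1+s^2)^2 * ((1-x)^2 + y^2)
        = (1-s^2)*(1+3*s^2)*(1-(x^2+y^2)) + 2*(1-s^2)^2*(1+x) := by ring
    have hs2 : s^2 ≤ 1 := by nlinarith
    nlinarith [mul_nonneg (mul_nonneg (by linarith : (0:ℝ) ≤ 1-s^2)
        (by positivity : (0:ℝ) ≤ 1+3*s^2))
      (by linarith : (0:ℝ) ≤ 1-(x^2+y^2)),
      mul_nonneg (by positivity : (0:ℝ) ≤ 2*(1-s^2)^2) (by linarith : (0:ℝ) ≤ 1+x)]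
  have hl : 0 ≤ (1+s^2) * Complex.abs (1 - z) := by positivity
  have hr : 0 ≤ 2 * Complex.abs (1 - (s^2:ℝ)*z) := by positivity
  nlinarith [key, hl, hr]

lemma re_frac_neg {w : ℂ} (hw : Complex.abs w < 1) : ((w - 1)/(w + 1)).re < 0 := by
  have hw1 : w + 1 ≠ 0 := by
    intro h
    have : w = -1 := by linear_combination h
    rw [this] at hw; simp at hw
  have hns : 0 < Complex.normSq (w + 1) := by
    rwa [Complex.normSq_pos]
  have hnum : Complex.normSq w < 1 := by
    have := Complex.sq_abs w; nlinarith [Complex.abs.nonneg w]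
  rw [Complex.div_re]
  have h1 : (w - 1).re * (w + 1).re + (w - 1).im * (w + 1).im = Complex.normSq w - 1 := by
    simp [Complex.sub_re, Complex.sub_im, Complex.add_re, Complex.add_im, Complex.normSq_apply]
    ring
  have h2 : (w - 1).re * (w + 1).re / Complex.normSq (w + 1)
      + (w - 1).im * (w + 1).im / Complex.normSq (w + 1)
      = (Complex.normSq w - 1) / Complex.normSq (w + 1) := by
    rw [← add_div, h1]
  rw [h2]
  exact div_neg_of_neg_of_pos (by linarith) hns

/-- conjugated map on the disk -/
def F (t : ℝ) (θ : ℂ) (w : ℂ) : ℂ :=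
  Complex.exp (2 * Complex.I * θ) * Complex.exp (2 * t * (w - 1) / (w + 1))

lemma F_abs_lt (t : ℝ) (θ : ℂ) {w : ℂ} (ht : 0 < t) (hw : Complex.abs w < 1) :
    Complex.abs (F t θ w) < Real.exp (-(2 * θ.im)) := by
  rw [F, map_mul, Complex.abs_exp, Complex.abs_exp]
  have h1 : (2 * Complex.I * θ).re = -(2 * θ.im) := by simp
  have h2 : (2 * (t:ℂ) * (w - 1) / (w + 1)).re < 0 := by
    have h : 2 * (t:ℂ) * (w - 1) / (w + 1) = (2*t : ℝ) * ((w - 1)/(w + 1)) := by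
      push_cast; ring
    rw [h, Complex.re_ofReal_mul]
    exact mul_neg_of_pos_of_neg (by linarith) (re_frac_neg hw)
  rw [h1]
  calc Real.exp (-(2*θ.im)) * Real.exp ((2 * (t:ℂ) * (w - 1) / (w + 1)).re)
      < Real.exp (-(2*θ.im)) * 1 := by
        apply mul_lt_mul_of_pos_left _ (Real.exp_pos _)
        rw [Real.exp_lt_one_iff]
        exact h2
    _ = Real.exp (-(2*θ.im)) := mul_one _

lemma F_diff (t : ℝ) (θ : ℂ) : DifferentiableOn ℂ (F t θ) (ball 0 1) := by
  apply DifferentiableOn.const_mul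
  apply DifferentiableOn.cexp
  apply DifferentiableOn.div
  · exact ((differentiable_const _).mul (differentiable_id.sub_const 1)).differentiableOn
  · exact (differentiable_id.add_const 1).differentiableOn
  · intro z hz
    rw [mem_ball_zero_iff] at hz
    intro h
    have : z = -1 := by linear_combination h
    rw [this] at hz; simp at hz

lemma exp_two_abs_lt {z : ℂ} (hz : 0 < z.im) :
    Complex.abs (Complex.exp (2 * Complex.I * z)) < 1 := by
  rw [Complex.abs_exp]
  have h : (2 * Complex.I * z).re = -(2*z.im) := by simp
  rw [h, Real.exp_lt_one_iff]
  linarith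

lemma tan_formula {z : ℂ} (hz : 0 < z.im) :
    Complex.I * Complex.tan z
      = (Complex.exp (2 * Complex.I * z) - 1) / (Complex.exp (2 * Complex.I * z) + 1) := by
  have he : Complex.exp (z * Complex.I) ≠ 0 := Complex.exp_ne_zero _
  have hw : Complex.exp (2 * Complex.I * z)
      = Complex.exp (z * Complex.I) * Complex.exp (z * Complex.I) := by
    rw [← Complex.exp_add]; ring_nf
  have hw1 : Complex.exp (2 * Complex.I * z) + 1 ≠ 0 := by
    intro h
    have habs := exp_two_abs_lt hz
    have h2 : Complex.exp (2 * Complex.I * z) = -1 := by linear_combination h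
    rw [h2] at habs; simp at habs
  have hcos : Complex.cos z ≠ 0 := by
    rw [Complex.cos]
    have h : Complex.exp (z * Complex.I) + Complex.exp (-z * Complex.I)
        = (Complex.exp (2 * Complex.I * z) + 1) / Complex.exp (z * Complex.I) := by
      rw [hw, neg_mul, Complex.exp_neg]
      field_simp
    rw [h]
    simp [div_eq_zero_iff, hw1, he]
  rw [Complex.tan, Complex.sin, Complex.cos]
  rw [neg_mul, Complex.exp_neg]
  rw [hw] at hw1 ⊢
  field_simp
  rw [Complex.I_sq]; ring

lemma tan_as_frac {z : ℂ} (hz : 0 < z.im) :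
    Complex.tan z = -Complex.I *
      ((Complex.exp (2 * Complex.I * z) - 1) / (Complex.exp (2 * Complex.I * z) + 1)) := by
  have h := tan_formula hz
  have h2 : -Complex.I * (Complex.I * Complex.tan z) = Complex.tan z := by
    rw [← mul_assoc]
    simp [Complex.I_mul_I]
  rw [← h2, h]

lemma im_tan_pos {z : ℂ} (hz : 0 < z.im) : 0 < (Complex.tan z).im := by
  rw [tan_as_frac hz]
  set u := (Complex.exp (2 * Complex.I * z) - 1) / (Complex.exp (2 * Complex.I * z) + 1)
  have h : (-Complex.I * u).im = -u.re := by simp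
  rw [h]
  have := re_frac_neg (exp_two_abs_lt hz)
  linarith

lemma conj_step (t : ℝ) (θ : ℂ) {z : ℂ} (hz : 0 < z.im) :
    Complex.exp (2 * Complex.I * (θ + t * Complex.tan z))
      = F t θ (Complex.exp (2 * Complex.I * z)) := by
  rw [F]
  rw [show (2 : ℂ) * Complex.I * (θ + t * Complex.tan z)
      = 2 * Complex.I * θ + 2 * t * (Complex.I * Complex.tan z) by ring]
  rw [Complex.exp_add, tan_formula hz]
  congr 1
  field_simp

/-- pseudo-hyperbolic distance -/
def pr (a b : ℂ) : ℝ := Complex.abs (a - b) / Complex.abs (1 - conj' b * a)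

lemma pr_nonneg (a b : ℂ) : 0 ≤ pr a b := by
  rw [pr]; positivity

lemma pr_lt_one {a b : ℂ} (ha : Complex.abs a < 1) (hb : Complex.abs b < 1) :
    pr a b < 1 := by
  rw [pr, div_lt_one (abs_den_pos ha hb)]
  exact abs_num_lt_den ha hb

lemma abs_sub_le_two_pr {a b : ℂ} (ha : Complex.abs a < 1) (hb : Complex.abs b < 1) :
    Complex.abs (a - b) ≤ 2 * pr a b := by
  have hd : Complex.abs (1 - conj' b * a) ≤ 2 := by
    calc Complex.abs (1 - conj' b * a) ≤ Complex.abs 1 + Complex.abs (conj' b * a) := by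
          have := Complex.abs.add_le 1 (-(conj' b * a))
          rwa [← sub_eq_add_neg, map_neg_eq_map] at this
      _ ≤ 1 + 1 := by
          simp only [map_one]
          gcongr
          rw [map_mul, Complex.abs_conj]
          nlinarith [Complex.abs.nonneg a, Complex.abs.nonneg b]
      _ = 2 := by norm_num
  have hdpos := abs_den_pos ha hb
  rw [pr, ← mul_div_assoc, le_div_iff₀ hdpos]
  nlinarith [Complex.abs.nonneg (a - b)]

lemma F_contr (t : ℝ) (θ : ℂ) (ht : 0 < t) (hθ : 0 < θ.im) {a b : ℂ}
    (ha : Complex.abs a < 1) (hb : Complex.abs b < 1) :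
    pr (F t θ a) (F t θ b)
      ≤ (2 * Real.exp (-(2 * θ.im)) / (1 + Real.exp (-(2 * θ.im))^2)) * pr a b := by
  set s : ℝ := Real.exp (-(2 * θ.im)) with hs_def
  have hs0 : 0 < s := Real.exp_pos _
  have hs1 : s < 1 := by rw [hs_def, Real.exp_lt_one_iff]; linarith
  set G : ℂ → ℂ := fun w => F t θ w / (s : ℂ) with hG
  have hGabs : ∀ {w : ℂ}, Complex.abs w < 1 → Complex.abs (G w) < 1 := by
    intro w hw
    rw [hG]
    simp only [map_div₀, Complex.abs_ofReal, abs_of_pos hs0]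
    rw [div_lt_one hs0]
    exact F_abs_lt t θ ht hw
  have hGdiff : DifferentiableOn ℂ G (ball 0 1) := (F_diff t θ).div_const _
  have hGmaps : MapsTo G (ball 0 1) (ball 0 1) :=
    fun w hw => mem_ball_zero_iff.2 (hGabs (mem_ball_zero_iff.1 hw))
  have hFa : Complex.abs (F t θ a) < 1 := lt_trans (F_abs_lt t θ ht ha) hs1
  have hFb : Complex.abs (F t θ b) < 1 := lt_trans (F_abs_lt t θ ht hb) hs1
  have hGa := hGabs ha
  have hGb := hGabs hb
  have hFG : ∀ w, F t θ w = (s : ℂ) * G w := by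
    intro w
    have hsne : ((s:ℝ) : ℂ) ≠ 0 := Complex.ofReal_ne_zero.2 hs0.ne'
    rw [hG, mul_div_cancel₀ _ hsne]
  set z : ℂ := conj' (G b) * G a with hz
  have hzle : Complex.abs z ≤ 1 := by
    rw [hz, map_mul, Complex.abs_conj]
    nlinarith [Complex.abs.nonneg (G b), Complex.abs.nonneg (G a)]
  have hscale := scale_ineq hs0.le hs1.le hzle
  have hpick := pick hGdiff hGmaps ha hb
  have hsz : 1 - conj' (F t θ b) * F t θ a = 1 - ((s^2 : ℝ) : ℂ) * z := by
    rw [hFG a, hFG b, map_mul, Complex.conj_ofReal, hz]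
    push_cast
    ring
  have hFsub : Complex.abs (F t θ a - F t θ b) = s * Complex.abs (G a - G b) := by
    rw [hFG a, hFG b, ← mul_sub, map_mul, Complex.abs_ofReal, abs_of_pos hs0]
  set kk : ℝ := 2 * s / (1 + s^2) with hkk
  have hprod : Complex.abs (F t θ a - F t θ b) * Complex.abs (1 - conj' b * a)
      ≤ kk * Complex.abs (a - b) * Complex.abs (1 - conj' (F t θ b) * F t θ a) := by
    rw [hsz]
    calc Complex.abs (F t θ a - F t θ b) * Complex.abs (1 - conj' b * a)
        = s * (Complex.abs (G a - G b) * Complex.abs (1 - conj' b * a)) := by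
          rw [hFsub]; ring
      _ ≤ s * (Complex.abs (a - b) * Complex.abs (1 - z)) := by
          apply mul_le_mul_of_nonneg_left _ hs0.le
          exact hpick
      _ ≤ s * (Complex.abs (a - b) * (2 * Complex.abs (1 - ((s^2:ℝ):ℂ) * z) / (1 + s^2))) := by
          apply mul_le_mul_of_nonneg_left _ hs0.le
          apply mul_le_mul_of_nonneg_left _ (Complex.abs.nonneg _)
          rw [le_div_iff₀ (by positivity)]
          linarith [hscale]
      _ = kk * Complex.abs (a - b) * Complex.abs (1 - ((s^2:ℝ):ℂ) * z) := by
          rw [hkk]; field_simp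
  rw [pr, pr, ← mul_div_assoc, div_le_div_iff₀ (abs_den_pos hFa hFb) (abs_den_pos ha hb)]
  exact hprod

lemma F_iter_ball (t : ℝ) (θ : ℂ) (ht : 0 < t) (hθ : 0 < θ.im) :
    ∀ (n : ℕ) {w : ℂ}, Complex.abs w < 1 → Complex.abs ((F t θ)^[n] w) < 1 := by
  intro n
  induction n with
  | zero => intro w hw; simpa using hw
  | succ n ih =>
    intro w hw
    rw [Function.iterate_succ_apply']
    have hs1 : Real.exp (-(2 * θ.im)) < 1 := by rw [Real.exp_lt_one_iff]; linarith
    exact lt_trans (F_abs_lt t θ ht (ih hw)) hs1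

lemma F_iter_contr (t : ℝ) (θ : ℂ) (ht : 0 < t) (hθ : 0 < θ.im) :
    ∀ (n : ℕ) {a b : ℂ}, Complex.abs a < 1 → Complex.abs b < 1 →
      pr ((F t θ)^[n] a) ((F t θ)^[n] b)
        ≤ (2 * Real.exp (-(2 * θ.im)) / (1 + Real.exp (-(2 * θ.im))^2))^n * pr a b := by
  intro n
  induction n with
  | zero => intro a b _ _; simp
  | succ n ih =>
    intro a b ha hb
    rw [Function.iterate_succ_apply', Function.iterate_succ_apply', pow_succ]
    calc pr (F t θ ((F t θ)^[n] a)) (F t θ ((F t θ)^[n] b))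
        ≤ (2 * Real.exp (-(2 * θ.im)) / (1 + Real.exp (-(2 * θ.im))^2))
            * pr ((F t θ)^[n] a) ((F t θ)^[n] b) :=
          F_contr t θ ht hθ (F_iter_ball t θ ht hθ n ha) (F_iter_ball t θ ht hθ n hb)
      _ ≤ (2 * Real.exp (-(2 * θ.im)) / (1 + Real.exp (-(2 * θ.im))^2))
            * ((2 * Real.exp (-(2 * θ.im)) / (1 + Real.exp (-(2 * θ.im))^2))^n * pr a b) := by
          apply mul_le_mul_of_nonneg_left (ih ha hb) (by positivity)
      _ = (2 * Real.exp (-(2 * θ.im)) / (1 + Real.exp (-(2 * θ.im))^2))^n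
            * (2 * Real.exp (-(2 * θ.im)) / (1 + Real.exp (-(2 * θ.im))^2)) * pr a b := by
          ring

lemma orbit (t : ℝ) (θ : ℂ) (ht : 0 < t) (hθ : 0 < θ.im) :
    ∀ (n : ℕ) {x : ℂ}, 0 < x.im →
      0 < ((fun x : ℂ => θ + t * Complex.tan x)^[n] x).im ∧
      Complex.exp (2 * Complex.I * ((fun x : ℂ => θ + t * Complex.tan x)^[n] x))
        = (F t θ)^[n] (Complex.exp (2 * Complex.I * x)) := by
  intro n
  induction n with
  | zero => intro x hx; exact ⟨hx, rfl⟩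
  | succ n ih =>
    intro x hx
    obtain ⟨hy, he⟩ := ih hx
    set y := (fun x : ℂ => θ + t * Complex.tan x)^[n] x with hy_def
    constructor
    · rw [Function.iterate_succ_apply', ← hy_def]
      have h1 : ((θ + (t:ℂ) * Complex.tan y).im) = θ.im + t * (Complex.tan y).im := by
        simp [Complex.add_im, Complex.im_ofReal_mul]
      simp only [h1]
      exact add_pos hθ (mul_pos ht (im_tan_pos hy))
    · rw [Function.iterate_succ_apply', Function.iterate_succ_apply', ← hy_def, ← he]
      exact conj_step t θ hy

end Stmt13Aux

end

theorem stmt13 (t : ℝ) (ht : 0 < t) (θ : ℂ) (hθ : 0 < θ.im) (ζ : ℂ) (hζ : 0 < ζ.im)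
    (heq : ζ - t * Complex.tan ζ = θ) :
    TendstoLocallyUniformlyOn
      (fun (n : ℕ) (x : ℂ) => (fun x : ℂ => θ + t * Complex.tan x)^[n] x)
      (fun _ => ζ) Filter.atTop {x : ℂ | 0 < x.im} := by
  set f : ℂ → ℂ := fun x : ℂ => θ + ↑t * Complex.tan x with hf
  set s : ℝ := Real.exp (-(2 * θ.im)) with hs_def
  have hs0 : 0 < s := Real.exp_pos _
  have hs1 : s < 1 := by rw [hs_def, Real.exp_lt_one_iff]; linarith
  set k : ℝ := 2 * s / (1 + s ^ 2) with hk_def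
  have hk0 : 0 ≤ k := by positivity
  have hk1 : k < 1 := by
    rw [hk_def, div_lt_one (by positivity)]
    nlinarith
  set C : ℝ := 4 * t / (1 - s)^2 with hC_def
  have hC0 : 0 < C := by
    rw [hC_def]
    exact div_pos (by linarith) (pow_pos (by linarith) 2)
  -- fixed point data
  have hζθ : θ + (t : ℂ) * Complex.tan ζ = ζ := by linear_combination -heq
  set wz : ℂ := Complex.exp (2 * Complex.I * ζ) with hwz_def
  have hwz1 : Complex.abs wz < 1 := Stmt13Aux.exp_two_abs_lt hζ
  have hfix : Stmt13Aux.F t θ wz = wz := by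
    have h := Stmt13Aux.conj_step t θ hζ
    rw [hζθ] at h
    exact h.symm
  have hwzs : Complex.abs wz < s := by
    rw [← hfix]
    exact Stmt13Aux.F_abs_lt t θ ht hwz1
  have hwz_den : 1 - s ≤ Complex.abs (wz + 1) := by
    have h1 := Complex.abs.add_le (wz + 1) (-wz)
    rw [show (wz + 1) + -wz = 1 by ring] at h1
    simp only [map_one, map_neg_eq_map] at h1
    linarith
  -- the key uniform bound
  have hbound : ∀ (m : ℕ) (x : ℂ), 0 < x.im →
      Complex.abs (f^[m+2] x - ζ) ≤ C * k ^ m := by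
    intro m x hx
    obtain ⟨hy, he⟩ := Stmt13Aux.orbit t θ ht hθ (m+1) hx
    set y : ℂ := f^[m+1] x with hy_def
    set w0 : ℂ := Complex.exp (2 * Complex.I * x) with hw0_def
    have hw0 : Complex.abs w0 < 1 := Stmt13Aux.exp_two_abs_lt hx
    set wy : ℂ := Complex.exp (2 * Complex.I * y) with hwy_def
    have hwyF : wy = (Stmt13Aux.F t θ)^[m+1] w0 := he
    have hwy_s : Complex.abs wy < s := by
      rw [hwyF, Function.iterate_succ_apply']
      exact Stmt13Aux.F_abs_lt t θ ht (Stmt13Aux.F_iter_ball t θ ht hθ m hw0)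
    have hwy1 : Complex.abs wy < 1 := lt_trans hwy_s hs1
    have hwy_den : 1 - s ≤ Complex.abs (wy + 1) := by
      have h1 := Complex.abs.add_le (wy + 1) (-wy)
      rw [show (wy + 1) + -wy = 1 by ring] at h1
      simp only [map_one, map_neg_eq_map] at h1
      linarith
    have hfixiter : (Stmt13Aux.F t θ)^[m+1] wz = wz := Function.iterate_fixed hfix (m+1)
    have hprle : Stmt13Aux.pr wy wz ≤ k ^ m := by
      rw [hwyF, ← hfixiter]
      calc Stmt13Aux.pr ((Stmt13Aux.F t θ)^[m+1] w0) ((Stmt13Aux.F t θ)^[m+1] wz)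
          ≤ k ^ (m+1) * Stmt13Aux.pr w0 wz :=
            Stmt13Aux.F_iter_contr t θ ht hθ (m+1) hw0 hwz1
        _ ≤ k ^ (m+1) * 1 := by
            apply mul_le_mul_of_nonneg_left (Stmt13Aux.pr_lt_one hw0 hwz1).le (by positivity)
        _ = k ^ m * k := by ring
        _ ≤ k ^ m * 1 := by
            apply mul_le_mul_of_nonneg_left hk1.le (by positivity)
        _ = k ^ m := mul_one _
    have habsdiff : Complex.abs (wy - wz) ≤ 2 * k ^ m := by
      calc Complex.abs (wy - wz) ≤ 2 * Stmt13Aux.pr wy wz :=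
            Stmt13Aux.abs_sub_le_two_pr hwy1 hwz1
        _ ≤ 2 * k ^ m := by linarith
    -- exact expression
    have hwy_ne : wy + 1 ≠ 0 := by
      intro h
      have : wy = -1 := by linear_combination h
      rw [this] at hwy1; simp at hwy1
    have hwz_ne : wz + 1 ≠ 0 := by
      intro h
      have : wz = -1 := by linear_combination h
      rw [this] at hwz1; simp at hwz1
    have hstep : f^[m+2] x = f (f^[m+1] x) := Function.iterate_succ_apply' f (m+1) x
    have e1 : f^[m+2] x - ζ = (t : ℂ) * (Complex.tan y - Complex.tan ζ) := by
      rw [hstep, ← hy_def]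
      have hfy : f y = θ + (t:ℂ) * Complex.tan y := rfl
      rw [hfy]
      linear_combination hζθ
    have e3 : Complex.tan y - Complex.tan ζ
        = (-Complex.I) * (2 * (wy - wz)) / ((wy + 1) * (wz + 1)) := by
      rw [Stmt13Aux.tan_as_frac hy, Stmt13Aux.tan_as_frac hζ, ← hwy_def, ← hwz_def]
      field_simp
      ring
    have e4 : Complex.abs (f^[m+2] x - ζ)
        = t * (2 * Complex.abs (wy - wz)) / (Complex.abs (wy + 1) * Complex.abs (wz + 1)) := by
      rw [e1, e3]
      rw [show (t:ℂ) * ((-Complex.I) * (2 * (wy - wz)) / ((wy + 1) * (wz + 1)))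
          = (t:ℂ) * (-Complex.I) * (2 * (wy - wz)) / ((wy + 1) * (wz + 1)) by ring]
      rw [map_div₀, map_mul, map_mul, map_mul]
      simp [Complex.abs_ofReal, abs_of_pos ht]
    rw [e4]
    have hden_pos : (0:ℝ) < 1 - s := by linarith
    calc t * (2 * Complex.abs (wy - wz)) / (Complex.abs (wy + 1) * Complex.abs (wz + 1))
        ≤ t * (2 * (2 * k ^ m)) / ((1 - s) * (1 - s)) := by
          gcongr
        _ = C * k ^ m := by
          rw [hC_def]
          field_simp
          ring
  -- conclusion
  apply TendstoUniformlyOn.tendstoLocallyUniformlyOn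
  rw [Metric.tendstoUniformlyOn_iff]
  intro ε hε
  have htend : Filter.Tendsto (fun m : ℕ => C * k ^ m) Filter.atTop (nhds 0) := by
    have h := tendsto_pow_atTop_nhds_zero_of_lt_one hk0 hk1
    simpa using h.const_mul C
  have hev : ∀ᶠ m in Filter.atTop, C * k ^ m < ε := htend.eventually (gt_mem_nhds hε)
  obtain ⟨N, hN⟩ := Filter.eventually_atTop.1 hev
  filter_upwards [Filter.eventually_ge_atTop (N + 2)] with n hn
  intro x hx
  have hx' : 0 < x.im := hx
  have hn2 : n = (n - 2) + 2 := by omega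
  rw [Complex.dist_eq]
  have hb := hbound (n - 2) x hx'
  rw [← hn2] at hb
  calc Complex.abs (ζ - f^[n] x) = Complex.abs (f^[n] x - ζ) := Complex.abs.map_sub _ _
    _ ≤ C * k ^ (n - 2) := hb
    _ < ε := hN _ (by omega)
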